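/- The submodule N = {0, 8} of the Z-module Z/16Z is a 2-absorbing primary submodule but is not a 2-absorbing submodule: 2·2·2 ∈ (N : M) = 8Z but 2·2 ∉ (N : M), while for any a,b ∈ Z and m ∈ Z/16Z with abm ∈ N, one has am ∈ N or bm ∈ N or ab ∈ √(N : M) = 2Z. -/
import Mathlib


/-- A proper ideal `I` is 2-absorbing primary if `a*b*c ∈ I` implies
`a*b ∈ I` or `a*c ∈ √I` or `b*c ∈ √I`. -/
def IsTwoAbsPrimary {R : Type*} [CommRing R] (I : Ideal R) : Prop :=
  I ≠ ⊤ ∧ ∀ a b c : R, a * b * c ∈ I → a * b ∈ I ∨ a * c ∈ I.radical ∨ b * c ∈ I.radical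

/-- A proper submodule `N` of `M` is pseudo-absorbing primary if `(N :_R M)`
is a 2-absorbing primary ideal of `R`. -/
def IsPseudoAbsPrimary {R M : Type*} [CommRing R] [AddCommGroup M] [Module R M]
    (N : Submodule R M) : Prop :=
  N ≠ ⊤ ∧ IsTwoAbsPrimary (N.colon ⊤)

/-- `M` is a pseudo-absorbing primary multiplication module if every
pseudo-absorbing primary submodule `N` satisfies `N = I • M` for some ideal `I`. -/
def IsPAPMultiplication (R M : Type*) [CommRing R] [AddCommGroup M] [Module R M] : Prop :=
  ∀ N : Submodule R M, IsPseudoAbsPrimary N → ∃ I : Ideal R, N = I • (⊤ : Submodule R M)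

/-- N = {0,8} ⊆ ℤ/16ℤ is 2-absorbing primary but not 2-absorbing:
(N : M) = 8ℤ, √(N : M) = 2ℤ, 2·2·2 ∈ (N : M) but 2·2 ∉ (N : M), while
abm ∈ N always implies am ∈ N or bm ∈ N or ab ∈ √(N : M). -/
abbrev Nsub : Submodule ℤ (ZMod 16) := Submodule.span ℤ {(8 : ZMod 16)}

lemma mul_mem_N (u x : ZMod 16) (hx : x ∈ Nsub) : u * x ∈ Nsub := by
  rw [Submodule.mem_span_singleton] at hx ⊢
  obtain ⟨c, rfl⟩ := hx
  obtain ⟨n, rfl⟩ := ZMod.intCast_surjective u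
  exact ⟨n * c, by push_cast [zsmul_eq_mul]; ring⟩

lemma colon_eq : Nsub.colon ⊤ = Ideal.span {(8 : ℤ)} := by
  ext a
  rw [Submodule.mem_colon, Ideal.mem_span_singleton]
  constructor
  · intro h
    have h1 := h 1 trivial
    rw [Submodule.mem_span_singleton] at h1
    obtain ⟨c, hc⟩ := h1
    have : ((8 * c - a : ℤ) : ZMod 16) = 0 := by
      rw [zsmul_eq_mul, zsmul_eq_mul, mul_one] at hc
      push_cast
      linear_combination hc
    have := (ZMod.intCast_zmod_eq_zero_iff_dvd _ 16).1 this
    omega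
  · rintro ⟨c, rfl⟩ m -
    rw [zsmul_eq_mul]
    push_cast
    rw [mul_assoc, mul_comm]
    exact mul_mem_N _ _ (Submodule.mem_span_singleton_self _)

lemma rad_eq : (Nsub.colon ⊤).radical = Ideal.span {(2 : ℤ)} := by
  rw [colon_eq]
  apply le_antisymm
  · rw [((Ideal.span_singleton_prime (by norm_num)).2 Int.prime_two).radical_le_iff]
    exact Ideal.span_singleton_le_span_singleton.2 ⟨4, by norm_num⟩
  · rw [Ideal.span_le]
    intro x hx
    rw [Set.mem_singleton_iff] at hx
    subst hx
    exact Ideal.mem_radical_of_pow_mem (m := 3)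
      (Ideal.le_radical (by rw [Ideal.mem_span_singleton]; norm_num))

theorem stmt_3 :
    let N : Submodule ℤ (ZMod 16) := Submodule.span ℤ {(8 : ZMod 16)}
    N.colon ⊤ = Ideal.span {(8 : ℤ)} ∧
    (N.colon ⊤).radical = Ideal.span {(2 : ℤ)} ∧
    (2 * 2 * 2 : ℤ) ∈ N.colon ⊤ ∧
    (2 * 2 : ℤ) ∉ N.colon ⊤ ∧
    (∀ (a b : ℤ) (m : ZMod 16), a • b • m ∈ N →
      a • m ∈ N ∨ b • m ∈ N ∨ a * b ∈ (N.colon ⊤).radical) := by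
  intro N
  refine ⟨colon_eq, rad_eq, ?_, ?_, ?_⟩
  · rw [colon_eq, Ideal.mem_span_singleton]; norm_num
  · rw [colon_eq, Ideal.mem_span_singleton]; norm_num
  · intro a b m hm
    by_cases h2 : (2:ℤ) ∣ a * b
    · exact Or.inr (Or.inr (by rw [rad_eq, Ideal.mem_span_singleton]; exact h2))
    · left
      have key : ∀ x : ZMod 16, x ^ 4 = 1 ∨ x * 8 = 0 := by decide
      rw [zsmul_eq_mul, zsmul_eq_mul, ← mul_assoc] at hm
      have hm' : ((a * b : ℤ) : ZMod 16) * m ∈ N := by push_cast; exact hm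
      rcases key ((a * b : ℤ) : ZMod 16) with h4 | h0
      · have hmem : m ∈ N := by
          have := mul_mem_N (((a * b : ℤ) : ZMod 16) ^ 3) _ hm'
          rwa [← mul_assoc, ← pow_succ, h4, one_mul] at this
        rw [zsmul_eq_mul]
        exact mul_mem_N _ _ hmem
      · exfalso
        have h0' : ((a * b * 8 : ℤ) : ZMod 16) = 0 := by push_cast at h0 ⊢; linear_combination h0
        have := (ZMod.intCast_zmod_eq_zero_iff_dvd _ 16).1 h0'
        omega
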